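/- Let T1(r1, l1) and T2(r2, l2) be labeled rooted trees such that for every vertex u of T_i one has δ⁺(u) ≠ 1 and (δ⁺(u) = 0 ⇔ l_i(u) = 0), and l_i(v) < l_i(u) holds whenever v is a direct successor of u, for i = 1, 2. Then: (a) the labeled trees T1(l1) and T2(l2) are isomorphic (as labeled, unrooted trees) if and only if the ultrametric spaces (V(T1), d_{l1}) and (V(T2), d_{l2}) are isometric; (b) if (V(T1), d_{l1}) and (V(T2), d_{l2}) are isometric, then the following are equivalent: (i) |V(T1)| = |V(T2)| = 1; (ii) every isometry f : V(T1) → V(T2) of (V(T1), d_{l1}) and (V(T2), d_{l2}) is an isomorphism of the labeled trees T1(l1) and T2(l2). -/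

import Mathlib

open SimpleGraph

noncomputable section

variable {V : Type*}

/-- The degree of a vertex of a graph. -/
def vdeg (G : SimpleGraph V) (v : V) : ℕ := Nat.card (G.neighborSet v)

/- The out-degree of a vertex `v` of the tree `G` rooted at `r`:
`δ⁺(v) = δ(v)` if `v = r` and `δ⁺(v) = δ(v) - 1` otherwise. -/
open Classical in
def outDeg (G : SimpleGraph V) (r v : V) : ℕ :=
  if v = r then vdeg G v else vdeg G v - 1

/-- `v` is a direct successor of `u` in the tree `G` rooted at `r`:
`u` and `v` are adjacent and `u` lies on the path joining `v` and `r`. -/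
def DirectSucc (G : SimpleGraph V) (r u v : V) : Prop :=
  G.Adj u v ∧ ∃ p : G.Walk v r, p.IsPath ∧ u ∈ p.support

/-- A labeling `l` of the tree `G` rooted at `r` is monotone if `l⁻¹(0) = V₀⁺(T)`
and `l v < l u` whenever `v` is a direct successor of `u`. -/
def MonotoneLabeling (G : SimpleGraph V) (r : V) (l : V → NNReal) : Prop :=
  (∀ v, l v = 0 ↔ outDeg G r v = 0) ∧
    ∀ u v, DirectSucc G r u v → l v < l u

/-- A weight `w` on the tree `G` rooted at `r` is equidistant if it is strictly positive
on the edges and there is a constant `K` such that for every `u ∈ V₀⁺(T)`, the sum of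
the weights of the edges of the path joining `r` and `u` equals `K`. -/
def EquidistantWeight (G : SimpleGraph V) (r : V) (w : Sym2 V → NNReal) : Prop :=
  (∀ e ∈ G.edgeSet, 0 < w e) ∧
    ∃ K : NNReal, ∀ u, outDeg G r u = 0 →
      ∀ p : G.Walk r u, p.IsPath → (p.edges.map w).sum = K

/-- `d` is a metric on the set `A`. -/
def IsMetricOn (d : V → V → NNReal) (A : Set V) : Prop :=
  (∀ x ∈ A, ∀ y ∈ A, (d x y = 0 ↔ x = y)) ∧
  (∀ x ∈ A, ∀ y ∈ A, d x y = d y x) ∧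
  (∀ x ∈ A, ∀ y ∈ A, ∀ z ∈ A, d x y ≤ d x z + d z y)

/-- `d` is an ultrametric on the set `A`: a metric satisfying the strong triangle
inequality. -/
def IsUltrametricOn (d : V → V → NNReal) (A : Set V) : Prop :=
  IsMetricOn d A ∧ ∀ x ∈ A, ∀ y ∈ A, ∀ z ∈ A, d x y ≤ max (d x z) (d z y)

set_option linter.unusedSectionVars false
set_option linter.unusedVariables false

open SimpleGraph Walk
/-- max of labels over a list -/
def maxL (l : V → NNReal) (s : List V) : NNReal := (s.map l).foldr max 0

lemma maxL_nil (l : V → NNReal) : maxL l ([] : List V) = 0 := rfl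

lemma maxL_cons (l : V → NNReal) (x : V) (s : List V) :
    maxL l (x :: s) = max (l x) (maxL l s) := rfl

lemma le_maxL {l : V → NNReal} {s : List V} {x : V} (hx : x ∈ s) : l x ≤ maxL l s := by
  induction s with
  | nil => simp at hx
  | cons a t ih =>
    rcases List.mem_cons.mp hx with h | h
    · subst h; rw [maxL_cons]; exact le_max_left _ _
    · rw [maxL_cons]; exact le_trans (ih h) (le_max_right _ _)

lemma maxL_le {l : V → NNReal} {s : List V} {b : NNReal} (h : ∀ x ∈ s, l x ≤ b) :
    maxL l s ≤ b := by
  induction s with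
  | nil => simp [maxL_nil]
  | cons a t ih =>
    rw [maxL_cons]
    exact max_le (h a (by simp)) (ih fun x hx => h x (List.mem_cons_of_mem _ hx))

lemma maxL_eq_of_mem_of_le {l : V → NNReal} {s : List V} {x : V} (hx : x ∈ s)
    (h : ∀ y ∈ s, l y ≤ l x) : maxL l s = l x :=
  le_antisymm (maxL_le h) (le_maxL hx)

lemma maxL_append (l : V → NNReal) (s t : List V) :
    maxL l (s ++ t) = max (maxL l s) (maxL l t) := by
  induction s with
  | nil => simp [maxL_nil, maxL_cons]
  | cons a u ih => simp [maxL_cons, ih, max_assoc]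

variable {G : SimpleGraph V}

/-- the unique path between two vertices of a tree -/
def pth (hG : G.IsTree) (x y : V) : G.Walk x y := (hG.existsUnique_path x y).choose

lemma pth_isPath (hG : G.IsTree) (x y : V) : (pth hG x y).IsPath :=
  (hG.existsUnique_path x y).choose_spec.1

lemma pth_eq (hG : G.IsTree) {x y : V} (q : G.Walk x y) (hq : q.IsPath) : q = pth hG x y :=
  (hG.existsUnique_path x y).choose_spec.2 q hq

lemma pth_self (hG : G.IsTree) (x : V) : pth hG x x = Walk.nil :=
  (pth_eq hG Walk.nil IsPath.nil).symm

lemma walk_cons_of_ne {x y : V} (p : G.Walk x y) (hxy : x ≠ y) :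
    ∃ (w : V) (h : G.Adj x w) (q : G.Walk w y), p = Walk.cons h q := by
  cases p with
  | nil => exact absurd rfl hxy
  | cons h q => exact ⟨_, h, q, rfl⟩

/-- in a tree, if `w` is adjacent to the start of a path, and on the path,
then it is the second vertex -/
lemma adj_mem_path (hG : G.IsTree) {a b w : V} (p : G.Walk a b) (hp : p.IsPath)
    (h : G.Adj a w) (hw : w ∈ p.support) : ∃ q : G.Walk w b, p = Walk.cons h q := by
  classical
  have hwa : w ≠ a := h.ne'
  have ht : (p.takeUntil w hw).IsPath := hp.takeUntil hw
  have hedge : (Walk.cons h (Walk.nil : G.Walk w w)).IsPath := by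
    simp [Walk.cons_isPath_iff, hwa.symm]
  have : p.takeUntil w hw = Walk.cons h Walk.nil := by
    rw [pth_eq hG _ ht, pth_eq hG _ hedge]
  refine ⟨p.dropUntil w hw, ?_⟩
  conv_lhs => rw [← p.take_spec hw]
  rw [this]
  rfl

lemma second_eq_second {a b w w' : V} {p : G.Walk a b}
    {h : G.Adj a w} {h' : G.Adj a w'} {q : G.Walk w b} {q' : G.Walk w' b}
    (e1 : p = Walk.cons h q) (e2 : p = Walk.cons h' q') : w = w' := by
  have h2 := congrArg Walk.support (e1 ▸ e2)
  rw [Walk.support_cons, Walk.support_cons, q.support_eq_cons, q'.support_eq_cons] at h2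
  exact (List.cons_eq_cons.mp (List.cons_eq_cons.mp h2).2).1

section Tree
variable [Fintype V] {r : V} {l : V → NNReal} {d : V → V → NNReal}

/-- labels weakly increase along a path towards the root -/
lemma label_increasing_aux (hG : G.IsTree)
    (hc : ∀ u v, DirectSucc G r u v → l v < l u) :
    ∀ {x y : V} (p : G.Walk x y), r = y → p.IsPath → ∀ z ∈ p.support, l x ≤ l z := by
  intro x y p
  induction p with
  | nil => rintro rfl _ z hz; simp at hz; subst hz; rfl
  | @cons a e _ h q ih =>
    rintro rfl hp z hz
    have hds : DirectSucc G r e a := ⟨h.symm, Walk.cons h q, hp, by simp⟩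
    have hlt : l a < l e := hc _ _ hds
    rcases List.mem_cons.mp (by simpa using hz) with h1 | h1
    · subst h1; rfl
    · exact le_trans hlt.le (ih rfl hp.of_cons z h1)

lemma label_increasing (hG : G.IsTree)
    (hc : ∀ u v, DirectSucc G r u v → l v < l u) :
    ∀ {x : V} (p : G.Walk x r), p.IsPath → ∀ z ∈ p.support, l x ≤ l z :=
  fun p hp => label_increasing_aux hG hc p rfl hp

lemma label_increasing' (hG : G.IsTree)
    (hc : ∀ u v, DirectSucc G r u v → l v < l u) :
    ∀ {x : V} (p : G.Walk x r), p.IsPath → ∀ z ∈ p.support, z ≠ x → l x < l z := by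
  intro x p hp z hz hzx
  have hxr : x ≠ r := by
    rintro rfl
    have hnil := (Walk.isPath_iff_eq_nil (p := p)).mp hp
    subst hnil
    simp at hz
    exact hzx hz
  rcases walk_cons_of_ne p hxr with ⟨w, h, q, he⟩
  subst he
  have hds : DirectSucc G r w x := ⟨h.symm, Walk.cons h q, hp, by simp⟩
  have hlt : l x < l w := hc _ _ hds
  rcases List.mem_cons.mp (by simpa using hz) with h1 | h1
  · exact absurd h1 hzx
  · exact lt_of_lt_of_le hlt (label_increasing hG hc q hp.of_cons z h1)

lemma l_le_root (hG : G.IsTree)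
    (hc : ∀ u v, DirectSucc G r u v → l v < l u) (x : V) : l x ≤ l r :=
  label_increasing hG hc (pth hG x r) (pth_isPath hG x r) r (Walk.end_mem_support _)

lemma l_lt_root (hG : G.IsTree)
    (hc : ∀ u v, DirectSucc G r u v → l v < l u) {x : V} (hx : x ≠ r) : l x < l r :=
  label_increasing' hG hc (pth hG x r) (pth_isPath hG x r) r (Walk.end_mem_support _)
    (Ne.symm hx)

lemma d_le_root (hG : G.IsTree)
    (hc : ∀ u v, DirectSucc G r u v → l v < l u)
    (hd0 : ∀ u, d u u = 0)
    (hd : ∀ u v, u ≠ v → ∀ p : G.Walk u v, p.IsPath →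
      d u v = (p.support.map l).foldr max 0) (x y : V) : d x y ≤ l r := by
  by_cases hxy : x = y
  · subst hxy; rw [hd0]; exact zero_le
  · rw [hd x y hxy (pth hG x y) (pth_isPath hG x y)]
    exact maxL_le fun z _ => l_le_root hG hc z

lemma d_symm (hG : G.IsTree)
    (hd0 : ∀ u, d u u = 0)
    (hd : ∀ u v, u ≠ v → ∀ p : G.Walk u v, p.IsPath →
      d u v = (p.support.map l).foldr max 0) (x y : V) : d x y = d y x := by
  by_cases hxy : x = y
  · subst hxy; rfl
  · rw [hd x y hxy (pth hG x y) (pth_isPath hG x y),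
      hd y x (Ne.symm hxy) ((pth hG x y).reverse) ((pth_isPath hG x y).reverse)]
    show maxL l _ = maxL l _
    rw [Walk.support_reverse]
    exact le_antisymm (maxL_le fun z hz => le_maxL (by simpa using hz))
      (maxL_le fun z hz => le_maxL (by simpa using hz))

lemma d_to_root (hG : G.IsTree)
    (hc : ∀ u v, DirectSucc G r u v → l v < l u)
    (hd : ∀ u v, u ≠ v → ∀ p : G.Walk u v, p.IsPath →
      d u v = (p.support.map l).foldr max 0) {x : V} (hx : x ≠ r) : d x r = l r := by
  rw [hd x r hx (pth hG x r) (pth_isPath hG x r)]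
  show maxL l _ = _
  exact maxL_eq_of_mem_of_le (Walk.end_mem_support _) (fun y _ => l_le_root hG hc y)

lemma d_adj (hG : G.IsTree)
    (hd : ∀ u v, u ≠ v → ∀ p : G.Walk u v, p.IsPath →
      d u v = (p.support.map l).foldr max 0) {x y : V} (h : G.Adj x y) :
    d x y = max (l x) (l y) := by
  have hedge : (Walk.cons h (Walk.nil : G.Walk y y)).IsPath := by
    simp [Walk.cons_isPath_iff, h.ne]
  rw [hd x y h.ne _ hedge]
  show maxL l [x, y] = _
  rw [maxL_cons, maxL_cons, maxL_nil]
  simp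

/-- a vertex with a unique neighbor cannot be in the interior of a path -/
lemma no_interior {a b z y : V} (p : G.Walk a b) (hp : p.IsPath)
    (hz : z ∈ p.support) (hza : z ≠ a) (hzb : z ≠ b)
    (huniq : ∀ w, G.Adj z w → w = y) : False := by
  classical
  have hdp : (p.dropUntil z hz).IsPath := hp.dropUntil hz
  have htp : (p.takeUntil z hz).IsPath := hp.takeUntil hz
  obtain ⟨w1, h1, q1, he1⟩ := walk_cons_of_ne (p.dropUntil z hz) hzb
  obtain ⟨w2, h2, q2, he2⟩ := walk_cons_of_ne ((p.takeUntil z hz).reverse) hza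
  have hw1 : w1 = y := huniq _ h1
  have hw2 : w2 = y := huniq _ h2
  have hy1 : y ∈ (p.dropUntil z hz).support := by
    rw [he1, Walk.support_cons]
    exact List.mem_cons_of_mem _ (hw1 ▸ Walk.start_mem_support q1)
  have hy2 : y ∈ (p.takeUntil z hz).support := by
    have : y ∈ ((p.takeUntil z hz).reverse).support := by
      rw [he2, Walk.support_cons]
      exact List.mem_cons_of_mem _ (hw2 ▸ Walk.start_mem_support q2)
    simpa [Walk.support_reverse] using this
  have hyz : y ≠ z := Ne.symm (hw1 ▸ h1.ne)
  have hy1t : y ∈ (p.dropUntil z hz).support.tail := by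
    have hh := (p.dropUntil z hz).support_eq_cons
    rcases List.mem_cons.mp (hh ▸ hy1) with h | h
    · exact absurd h hyz
    · exact h
  have hnodup : (p.support).Nodup := hp.support_nodup
  have : ((p.takeUntil z hz).support ++ ((p.dropUntil z hz).support).tail).Nodup := by
    rw [← Walk.support_append, p.take_spec hz]; exact hnodup
  exact (List.disjoint_of_nodup_append this) hy2 hy1t

end Tree
section Tree2
variable [Fintype V] {r : V} {l : V → NNReal} {d : V → V → NNReal}

lemma exists_anc (hG : G.IsTree) {x : V} (hx : x ≠ r) :
    ∃ c, G.Adj r c ∧ c ∈ (pth hG x r).support := by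
  obtain ⟨w, h, q, he⟩ := walk_cons_of_ne ((pth hG x r).reverse) (Ne.symm hx)
  refine ⟨w, h, ?_⟩
  have : w ∈ (pth hG x r).reverse.support := by rw [he]; simp
  simpa [Walk.support_reverse] using this

lemma child_unique (hG : G.IsTree) {x c c' : V} (h : G.Adj r c) (h' : G.Adj r c')
    (hm : c ∈ (pth hG x r).support) (hm' : c' ∈ (pth hG x r).support) : c = c' := by
  set R := (pth hG x r).reverse with hR
  have hRp : R.IsPath := (pth_isPath hG x r).reverse
  have hcR : c ∈ R.support := by simpa [hR, Walk.support_reverse] using hm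
  have hcR' : c' ∈ R.support := by simpa [hR, Walk.support_reverse] using hm'
  obtain ⟨q, he⟩ := adj_mem_path hG R hRp h hcR
  obtain ⟨q', he'⟩ := adj_mem_path hG R hRp h' hcR'
  exact second_eq_second he he'

-- the child of the root towards `x` (junk value `r` when `x = r`).
open Classical in
def anc (hG : G.IsTree) (r x : V) : V :=
  if h : x = r then r else (exists_anc (r := r) hG h).choose

lemma anc_adj (hG : G.IsTree) {x : V} (hx : x ≠ r) : G.Adj r (anc hG r x) := by
  rw [anc, dif_neg hx]; exact (exists_anc hG hx).choose_spec.1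


lemma anc_mem (hG : G.IsTree) {x : V} (hx : x ≠ r) :
    anc hG r x ∈ (pth hG x r).support := by
  rw [anc, dif_neg hx]; exact (exists_anc hG hx).choose_spec.2

lemma anc_eq_of (hG : G.IsTree) {x : V} (hx : x ≠ r) {c : V} (h : G.Adj r c)
    (hm : c ∈ (pth hG x r).support) : anc hG r x = c :=
  child_unique hG (anc_adj hG hx) h (anc_mem hG hx) hm

lemma anc_child_self (hG : G.IsTree) {c : V} (h : G.Adj r c) : anc hG r c = c :=
  anc_eq_of hG (Ne.symm h.ne) h (Walk.start_mem_support _)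

lemma anc_ne_r (hG : G.IsTree) {x : V} (hx : x ≠ r) : anc hG r x ≠ r :=
  Ne.symm (anc_adj hG hx).ne

lemma anc_const_aux (hG : G.IsTree) :
    ∀ (n : ℕ) {x : V} (hx : x ≠ r), (pth hG x r).length ≤ n →
      ∀ {z : V}, z ∈ (pth hG x r).support → z ≠ r → anc hG r z = anc hG r x := by
  intro n
  induction n with
  | zero =>
    intro x hx hlen z hz hzr
    obtain ⟨y, h, q, he⟩ := walk_cons_of_ne (pth hG x r) hx
    rw [he] at hlen; simp [Walk.length_cons] at hlen
  | succ n ih =>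
    intro x hx hlen z hz hzr
    obtain ⟨y, h, q, he⟩ := walk_cons_of_ne (pth hG x r) hx
    have hqp : q.IsPath := by
      have := pth_isPath hG x r
      rw [he] at this
      exact this.of_cons
    have hq : q = pth hG y r := pth_eq hG q hqp
    rcases List.mem_cons.mp (by rw [he] at hz; simpa using hz) with h1 | h1
    · subst h1; rfl
    · by_cases hyr : y = r
      · subst hyr
        have : q = Walk.nil := (Walk.isPath_iff_eq_nil (p := q)).mp hqp
        subst this
        simp at h1
        exact absurd h1 hzr
      · have hlen' : (pth hG y r).length ≤ n := by
          rw [← hq]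
          have := congrArg Walk.length he
          simp [Walk.length_cons] at this
          omega
        have h2 : anc hG r z = anc hG r y := ih hyr hlen' (hq ▸ h1) hzr
        have h3 : anc hG r x = anc hG r y := by
          refine anc_eq_of hG hx (anc_adj hG hyr) ?_
          have : anc hG r y ∈ q.support := hq ▸ anc_mem hG hyr
          rw [he, Walk.support_cons]
          exact List.mem_cons_of_mem _ this
        rw [h2, h3]

lemma anc_const (hG : G.IsTree) {x : V} (hx : x ≠ r) {z : V}
    (hz : z ∈ (pth hG x r).support) (hzr : z ≠ r) : anc hG r z = anc hG r x :=
  anc_const_aux hG (pth hG x r).length hx le_rfl hz hzr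

lemma anc_eq_of_adj (hG : G.IsTree) {z w : V} (hz : z ≠ r) (hw : w ≠ r)
    (h : G.Adj z w) : anc hG r z = anc hG r w := by
  by_cases hm : w ∈ (pth hG z r).support
  · exact (anc_const hG hz hm hw).symm
  · have hP : (Walk.cons h.symm (pth hG z r)).IsPath := by
      rw [Walk.cons_isPath_iff]; exact ⟨pth_isPath hG z r, hm⟩
    have he : Walk.cons h.symm (pth hG z r) = pth hG w r := pth_eq hG _ hP
    refine anc_const hG hw ?_ hz
    rw [← he, Walk.support_cons]
    exact List.mem_cons_of_mem _ (Walk.start_mem_support _)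

lemma r_not_mem_pth (hG : G.IsTree) {x y : V} (hx : x ≠ r) (hy : y ≠ r)
    (hanc : anc hG r x = anc hG r y) : r ∉ (pth hG x y).support := by
  classical
  intro hr
  set p := pth hG x y with hp
  have htake : (p.takeUntil r hr).IsPath := (pth_isPath hG x y).takeUntil hr
  have hdrop : (p.dropUntil r hr).IsPath := (pth_isPath hG x y).dropUntil hr
  have e1 : p.takeUntil r hr = pth hG x r := pth_eq hG _ htake
  have e2 : (p.dropUntil r hr).reverse = pth hG y r := pth_eq hG _ hdrop.reverse
  set c := anc hG r x with hc
  have hcr : c ≠ r := anc_ne_r hG hx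
  have hc1 : c ∈ (p.takeUntil r hr).support := by rw [e1]; exact anc_mem hG hx
  have hc2 : c ∈ (p.dropUntil r hr).support := by
    have : c ∈ (pth hG y r).support := hanc ▸ anc_mem hG hy
    rw [← e2, Walk.support_reverse] at this
    simpa using this
  have hc2t : c ∈ (p.dropUntil r hr).support.tail := by
    have hh := (p.dropUntil r hr).support_eq_cons
    rcases List.mem_cons.mp (hh ▸ hc2) with h | h
    · exact absurd h hcr
    · exact h
  have hnodup : ((p.takeUntil r hr).support ++ ((p.dropUntil r hr).support).tail).Nodup := by
    rw [← Walk.support_append, p.take_spec hr]; exact (pth_isPath hG x y).support_nodup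
  exact (List.disjoint_of_nodup_append hnodup) hc1 hc2t

lemma walk_stay (hG : G.IsTree) {c : V} :
    ∀ {a b : V} (p : G.Walk a b), (a ≠ r ∧ anc hG r a = c) → r ∉ p.support →
      ∀ z ∈ p.support, z ≠ r ∧ anc hG r z = c := by
  intro a b p
  induction p with
  | nil => intro ha _ z hz; simp at hz; subst hz; exact ha
  | @cons a e _ h q ih =>
    intro ha hr z hz
    have her : e ≠ r := by
      intro hh
      exact hr (by rw [Walk.support_cons]
                   exact List.mem_cons_of_mem _ (hh ▸ Walk.start_mem_support q))
    have hhr : r ∉ q.support := fun hh => hr (by rw [Walk.support_cons]; exact List.mem_cons_of_mem _ hh)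
    have he : e ≠ r ∧ anc hG r e = c := ⟨her, (anc_eq_of_adj hG ha.1 her h).symm.trans ha.2⟩
    rcases List.mem_cons.mp (by simpa using hz) with h1 | h1
    · subst h1; exact ha
    · exact ih he hhr z h1

lemma supp_pth_in_class (hG : G.IsTree) {x y : V} (hx : x ≠ r) (hy : y ≠ r)
    (hanc : anc hG r x = anc hG r y) :
    ∀ z ∈ (pth hG x y).support, z ≠ r ∧ anc hG r z = anc hG r x :=
  walk_stay hG (pth hG x y) ⟨hx, rfl⟩ (r_not_mem_pth hG hx hy hanc)

end Tree2
section Tree3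
variable [Fintype V] {r : V} {l : V → NNReal} {d : V → V → NNReal}

lemma label_le_anc (hG : G.IsTree)
    (hc : ∀ u v, DirectSucc G r u v → l v < l u) {z : V} (hz : z ≠ r) :
    l z ≤ l (anc hG r z) :=
  label_increasing hG hc (pth hG z r) (pth_isPath hG z r) _ (anc_mem hG hz)

lemma label_lt_anc (hG : G.IsTree)
    (hc : ∀ u v, DirectSucc G r u v → l v < l u) {z : V} (hz : z ≠ r)
    (hne : anc hG r z ≠ z) : l z < l (anc hG r z) :=
  label_increasing' hG hc (pth hG z r) (pth_isPath hG z r) _ (anc_mem hG hz) hne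

lemma d_same_class (hG : G.IsTree)
    (hc : ∀ u v, DirectSucc G r u v → l v < l u)
    (hd0 : ∀ u, d u u = 0)
    (hd : ∀ u v, u ≠ v → ∀ p : G.Walk u v, p.IsPath →
      d u v = (p.support.map l).foldr max 0)
    {x y : V} (hx : x ≠ r) (hy : y ≠ r) (hanc : anc hG r x = anc hG r y) :
    d x y ≤ l (anc hG r x) := by
  by_cases hxy : x = y
  · subst hxy; rw [hd0]; exact zero_le
  · rw [hd x y hxy (pth hG x y) (pth_isPath hG x y)]
    refine maxL_le fun z hz => ?_
    obtain ⟨hzr, hzanc⟩ := supp_pth_in_class hG hx hy hanc z hz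
    exact hzanc ▸ label_le_anc hG hc hzr

lemma d_diff_class (hG : G.IsTree)
    (hc : ∀ u v, DirectSucc G r u v → l v < l u)
    (hd : ∀ u v, u ≠ v → ∀ p : G.Walk u v, p.IsPath →
      d u v = (p.support.map l).foldr max 0)
    {x y : V} (hx : x ≠ r) (hy : y ≠ r) (hanc : anc hG r x ≠ anc hG r y) :
    d x y = l r := by
  have hxy : x ≠ y := fun h => hanc (h ▸ rfl)
  set P := (pth hG x r).append ((pth hG y r).reverse) with hP
  have hsup : P.support = (pth hG x r).support ++ ((pth hG y r).support.reverse).tail := by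
    rw [hP, Walk.support_append, Walk.support_reverse]
  have htail : ((pth hG y r).support.reverse) =
      r :: ((pth hG y r).support.reverse).tail := by
    have := ((pth hG y r).reverse).support_eq_cons
    rwa [Walk.support_reverse] at this
  have hrev_nodup : ((pth hG y r).support.reverse).Nodup :=
    List.nodup_reverse.mpr (pth_isPath hG y r).support_nodup
  have hrt : r ∉ ((pth hG y r).support.reverse).tail := by
    intro hmem
    have := htail ▸ hrev_nodup
    exact (List.nodup_cons.mp this).1 hmem
  have hPpath : P.IsPath := by
    rw [Walk.isPath_def, hsup]
    refine List.Nodup.append (pth_isPath hG x r).support_nodup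
      ((List.tail_sublist _).nodup hrev_nodup) ?_
    intro z hz1 hz2
    have hzy : z ∈ (pth hG y r).support := by
      have : z ∈ (pth hG y r).support.reverse := (List.tail_sublist _).mem hz2
      simpa using this
    have hzr : z ≠ r := fun h => hrt (h ▸ hz2)
    have e1 : anc hG r z = anc hG r x := anc_const hG hx hz1 hzr
    have e2 : anc hG r z = anc hG r y := anc_const hG hy hzy hzr
    exact hanc (e1 ▸ e2)
  rw [hd x y hxy P hPpath]
  show maxL l _ = _
  refine maxL_eq_of_mem_of_le ?_ (fun z _ => l_le_root hG hc z)
  rw [hsup]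
  exact List.mem_append_left _ (Walk.end_mem_support _)

lemma vdeg_pos (hG : G.IsTree) {x : V} (hx : x ≠ r) : 0 < vdeg G x := by
  obtain ⟨y, h, q, he⟩ := walk_cons_of_ne (pth hG x r) hx
  rw [vdeg, Nat.card_coe_set_eq]
  exact (Set.ncard_pos (Set.toFinite _)).mpr ⟨y, h⟩

lemma unique_nbr_of_leaf (hG : G.IsTree) {x : V} (hx : x ≠ r)
    (h0 : outDeg G r x = 0) : ∃ y, G.Adj x y ∧ ∀ w, G.Adj x w → w = y := by
  have h1 : vdeg G x = 1 := by
    have := vdeg_pos hG hx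
    rw [outDeg, if_neg hx] at h0
    omega
  rw [vdeg, Nat.card_coe_set_eq, Set.ncard_eq_one] at h1
  obtain ⟨y, hy⟩ := h1
  refine ⟨y, ?_, fun w hw => ?_⟩
  · have : y ∈ G.neighborSet x := hy ▸ rfl
    exact this
  · have : w ∈ G.neighborSet x := hw
    rwa [hy] at this

lemma exists_child (hG : G.IsTree) {x : V} (hx : outDeg G r x ≠ 0) :
    ∃ w, DirectSucc G r x w := by
  by_cases hxr : x = r
  · rw [outDeg, if_pos hxr, vdeg, Nat.card_coe_set_eq] at hx
    obtain ⟨w, hw⟩ := Set.nonempty_of_ncard_ne_zero hx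
    refine ⟨w, hw, pth hG w r, pth_isPath hG w r, ?_⟩
    rw [hxr]
    exact Walk.end_mem_support _
  · rw [outDeg, if_neg hxr] at hx
    have h2 : 1 < vdeg G x := by have := vdeg_pos hG hxr; omega
    rw [vdeg, Nat.card_coe_set_eq] at h2
    obtain ⟨a, ha, b, hb, hab⟩ := (Set.one_lt_ncard (Set.toFinite _)).mp h2
    obtain ⟨y, h, q, he⟩ := walk_cons_of_ne (pth hG x r) hxr
    have key : ∀ w, G.Adj x w → w ≠ y → DirectSucc G r x w := by
      intro w hw hwy
      have hwm : w ∉ (pth hG x r).support := by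
        intro hm
        obtain ⟨q', he'⟩ := adj_mem_path hG (pth hG x r) (pth_isPath hG x r) hw hm
        exact hwy (second_eq_second he' he)
      refine ⟨hw, Walk.cons hw.symm (pth hG x r), ?_, ?_⟩
      · rw [Walk.cons_isPath_iff]; exact ⟨pth_isPath hG x r, hwm⟩
      · rw [Walk.support_cons]; exact List.mem_cons_of_mem _ (Walk.start_mem_support _)
    by_cases hay : a = y
    · exact ⟨b, key b hb (fun h => hab (hay ▸ h ▸ rfl))⟩
    · exact ⟨a, key a ha hay⟩

lemma root_label_pos (hG : G.IsTree)
    (hb : ∀ u, outDeg G r u = 0 ↔ l u = 0)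
    (hcard : 1 < Nat.card V) : 0 < l r := by
  have : ∃ x : V, x ≠ r := by
    have : 1 < Fintype.card V := by rwa [← Nat.card_eq_fintype_card]
    obtain ⟨a, b, hab⟩ := Fintype.exists_pair_of_one_lt_card this
    by_cases ha : a = r
    · exact ⟨b, fun hb' => hab (ha ▸ hb' ▸ rfl)⟩
    · exact ⟨a, ha⟩
  obtain ⟨x, hx⟩ := this
  have hadj : G.Adj r (anc hG r x) := anc_adj hG hx
  have : outDeg G r r ≠ 0 := by
    rw [outDeg, if_pos rfl, vdeg, Nat.card_coe_set_eq]
    have : (G.neighborSet r).Nonempty := ⟨anc hG r x, hadj⟩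
    have := (Set.ncard_pos (Set.toFinite _)).mpr this
    omega
  have := (not_iff_not.mpr (hb r)).mp this
  exact pos_iff_ne_zero.mpr this

lemma leaf_class_singleton (hG : G.IsTree)
    (hb : ∀ u, outDeg G r u = 0 ↔ l u = 0)
    {c : V} (hadj : G.Adj r c) (hc0 : l c = 0) {z : V}
    (hz : z ≠ r) (hanc : anc hG r z = c) : z = c := by
  by_contra hzc
  have hcr : c ≠ r := Ne.symm hadj.ne
  have h0 : outDeg G r c = 0 := (hb c).mpr hc0
  obtain ⟨y, hy, huniq⟩ := unique_nbr_of_leaf hG hcr h0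
  exact no_interior (pth hG z r) (pth_isPath hG z r) (hanc ▸ anc_mem hG hz)
    (fun h => hzc h.symm) hcr huniq

lemma apex_iff (hG : G.IsTree)
    (hb : ∀ u, outDeg G r u = 0 ↔ l u = 0)
    (hc : ∀ u v, DirectSucc G r u v → l v < l u)
    (hd0 : ∀ u, d u u = 0)
    (hd : ∀ u v, u ≠ v → ∀ p : G.Walk u v, p.IsPath →
      d u v = (p.support.map l).foldr max 0) (x : V) :
    (∀ y, y ≠ x → d x y = l r) ↔ (x = r ∨ (G.Adj r x ∧ l x = 0)) := by
  constructor
  · intro hapex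
    by_contra hcon
    push_neg at hcon
    obtain ⟨hxr, hleaf⟩ := hcon
    by_cases h0 : outDeg G r x = 0
    · have hx0 : l x = 0 := (hb x).mp h0
      have hnadj : ¬ G.Adj r x := fun h => hleaf h hx0
      obtain ⟨y0, h, q, he⟩ := walk_cons_of_ne (pth hG x r) hxr
      have hy0r : y0 ≠ r := by
        rintro rfl
        exact hnadj h.symm
      have hdxy : d x y0 = l y0 := by
        rw [d_adj hG hd h, hx0]
        simp
      have := hapex y0 (Ne.symm h.ne)
      rw [hdxy] at this
      exact absurd this (ne_of_lt (l_lt_root hG hc hy0r))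
    · obtain ⟨w, hds⟩ := exists_child hG h0
      have hdxw : d x w = l x := by
        rw [d_adj hG hd hds.1]
        exact max_eq_left (hc _ _ hds).le
      have := hapex w (Ne.symm hds.1.ne)
      rw [hdxw] at this
      exact absurd this (ne_of_lt (l_lt_root hG hc hxr))
  · rintro (rfl | ⟨hadj, hx0⟩) y hy
    · rw [d_symm hG hd0 hd]
      exact d_to_root hG hc hd hy
    · have hxr : x ≠ r := Ne.symm hadj.ne
      by_cases hyr : y = r
      · subst hyr; exact d_to_root hG hc hd hxr
      · have hancx : anc hG r x = x := anc_child_self hG hadj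
        have hancy : anc hG r x ≠ anc hG r y := by
          rw [hancx]
          intro h
          exact hy (leaf_class_singleton hG hb hadj hx0 hyr h.symm)
        exact d_diff_class hG hc hd hxr hyr hancy

lemma exists_ne_root (hcard : 1 < Nat.card V) : ∃ x : V, x ≠ r := by
  have : 1 < Fintype.card V := by rwa [← Nat.card_eq_fintype_card]
  obtain ⟨a, b, hab⟩ := Fintype.exists_pair_of_one_lt_card this
  by_cases ha : a = r
  · exact ⟨b, fun hb' => hab (ha ▸ hb' ▸ rfl)⟩
  · exact ⟨a, ha⟩

lemma exists_leaf_swap (hG : G.IsTree)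
    (hb : ∀ u, outDeg G r u = 0 ↔ l u = 0)
    (hc : ∀ u v, DirectSucc G r u v → l v < l u)
    (hd : ∀ u v, u ≠ v → ∀ p : G.Walk u v, p.IsPath →
      d u v = (p.support.map l).foldr max 0)
    (hcard : 1 < Nat.card V) :
    ∃ p c : V, l c = 0 ∧ 0 < l p ∧ p ≠ c ∧
      (∀ x, x ≠ p → x ≠ c → d x p = d x c) := by
  classical
  have hnV : Nonempty V := hG.isConnected.nonempty
  obtain ⟨c, _, hmax⟩ := Finset.exists_max_image Finset.univ
    (fun v => (pth hG v r).length) ⟨Classical.arbitrary V, Finset.mem_univ _⟩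
  obtain ⟨x0, hx0⟩ := exists_ne_root (r := r) hcard
  have hcr : c ≠ r := by
    obtain ⟨y, h, q, he⟩ := walk_cons_of_ne (pth hG x0 r) hx0
    have h1 : 1 ≤ (pth hG x0 r).length := by rw [he]; simp [Walk.length_cons]
    have h2 := hmax x0 (Finset.mem_univ _)
    intro hh
    rw [hh, pth_self] at h2
    simp [-Walk.length_eq_zero_iff] at h2
    omega
  have hleaf : outDeg G r c = 0 := by
    by_contra h0
    obtain ⟨w, hds⟩ := exists_child hG h0
    obtain ⟨hadjj, pw, hpw, hcm⟩ := hds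
    have hpw_eq : pw = pth hG w r := pth_eq hG pw hpw
    rw [hpw_eq] at hcm
    have hdrop : ((pth hG w r).dropUntil c hcm).IsPath := (pth_isPath hG w r).dropUntil hcm
    have hdrop_eq : (pth hG w r).dropUntil c hcm = pth hG c r := pth_eq hG _ hdrop
    have hlen : (pth hG w r).length =
        ((pth hG w r).takeUntil c hcm).length + ((pth hG w r).dropUntil c hcm).length := by
      rw [← Walk.length_append, (pth hG w r).take_spec hcm]
    obtain ⟨y, h, q, he⟩ := walk_cons_of_ne ((pth hG w r).takeUntil c hcm) (Ne.symm hadjj.ne)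
    have h1 : 1 ≤ ((pth hG w r).takeUntil c hcm).length := by rw [he]; simp [Walk.length_cons]
    have h2 := hmax w (Finset.mem_univ _)
    rw [hlen, hdrop_eq] at h2
    simp [-Walk.length_eq_zero_iff] at h2
    omega
  have hc0 : l c = 0 := (hb c).mp hleaf
  obtain ⟨p, hadjcp, huniq⟩ := unique_nbr_of_leaf hG hcr hleaf
  have hds : DirectSucc G r p c := by
    obtain ⟨y0, h, q, he⟩ := walk_cons_of_ne (pth hG c r) hcr
    have hy0 : y0 = p := huniq y0 h
    refine ⟨hadjcp.symm, pth hG c r, pth_isPath hG c r, ?_⟩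
    rw [he, Walk.support_cons]
    exact List.mem_cons_of_mem _ (hy0 ▸ Walk.start_mem_support q)
  have hlp : 0 < l p := by
    have := hc _ _ hds
    rw [hc0] at this
    exact this
  refine ⟨p, c, hc0, hlp, Ne.symm hadjcp.ne, ?_⟩
  intro x hxp hxc
  have hcmem : c ∉ (pth hG x p).support := by
    intro hm
    exact no_interior (pth hG x p) (pth_isPath hG x p) hm (Ne.symm hxc)
      hadjcp.ne huniq
  set Q := (pth hG x p).concat hadjcp.symm with hQ
  have hQpath : Q.IsPath := by
    rw [← Walk.isPath_reverse_iff, hQ, Walk.reverse_concat, Walk.cons_isPath_iff]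
    refine ⟨(pth_isPath hG x p).reverse, ?_⟩
    rw [Walk.support_reverse]
    simpa using hcmem
  rw [hd x p hxp (pth hG x p) (pth_isPath hG x p), hd x c hxc Q hQpath]
  show maxL l _ = maxL l _
  rw [hQ, Walk.support_concat, maxL_append]
  have : maxL l [c] = 0 := by rw [maxL_cons, maxL_nil, hc0]; simp
  rw [this]
  simp

lemma reachable_induce {s : Set V} :
    ∀ {a b : V} (p : G.Walk a b), (∀ z ∈ p.support, z ∈ s) →
      ∀ (ha : a ∈ s) (hb : b ∈ s), (G.induce s).Reachable ⟨a, ha⟩ ⟨b, hb⟩ := by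
  intro a b p
  induction p with
  | nil => intro _ ha hb; exact Reachable.refl _
  | @cons a e _ h q ih =>
    intro hs ha hb
    have he : e ∈ s := hs e (by simp)
    have hadj : (G.induce s).Adj ⟨a, ha⟩ ⟨e, he⟩ := h
    exact hadj.reachable.trans (ih (fun z hz => hs z (by simp [hz])) he hb)

section Subtree
variable [Fintype V] {r : V} {l : V → NNReal} {d : V → V → NNReal}
variable (hG : G.IsTree) {c : V} (hadj : G.Adj r c)

include hadj in
lemma sc_self : c ∈ {z | z ≠ r ∧ anc hG r z = c} :=
  ⟨Ne.symm hadj.ne, anc_child_self hG hadj⟩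

lemma sc_not_r : r ∉ {z | z ≠ r ∧ anc hG r z = c} := fun h => h.1 rfl

lemma sc_closed {z w : V} (hz : z ∈ {z | z ≠ r ∧ anc hG r z = c}) (h : G.Adj z w)
    (hw : w ≠ r) : w ∈ {z | z ≠ r ∧ anc hG r z = c} :=
  ⟨hw, (anc_eq_of_adj hG hz.1 hw h).symm.trans hz.2⟩

lemma sc_adj_r {z : V} (hz : z ∈ {z | z ≠ r ∧ anc hG r z = c}) (h : G.Adj z r) : z = c := by
  have := anc_child_self hG h.symm
  rw [← hz.2, this]

lemma sc_nbr {z w : V} (hz : z ∈ {z | z ≠ r ∧ anc hG r z = c}) (hzc : z ≠ c)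
    (h : G.Adj z w) : w ∈ {z | z ≠ r ∧ anc hG r z = c} := by
  by_cases hwr : w = r
  · exact absurd (sc_adj_r hG hz (hwr ▸ h)) hzc
  · exact sc_closed hG hz h hwr

lemma sc_supp_pth {a b : V} (ha : a ∈ {z | z ≠ r ∧ anc hG r z = c})
    (hb : b ∈ {z | z ≠ r ∧ anc hG r z = c}) :
    ∀ z ∈ (pth hG a b).support, z ∈ {z | z ≠ r ∧ anc hG r z = c} := by
  intro z hz
  have hra : r ∉ (pth hG a b).support :=
    r_not_mem_pth hG ha.1 hb.1 (ha.2.trans hb.2.symm)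
  have := walk_stay hG (pth hG a b) ⟨ha.1, ha.2⟩ hra z hz
  exact this

include hadj in
lemma sc_isTree : (G.induce {z | z ≠ r ∧ anc hG r z = c}).IsTree := by
  constructor
  · rw [connected_iff]
    constructor
    · rintro ⟨a, ha⟩ ⟨b, hb⟩
      exact reachable_induce (pth hG a b) (sc_supp_pth hG ha hb) ha hb
    · exact ⟨⟨c, sc_self hG hadj⟩⟩
  · intro u p hp
    have hinj : Function.Injective
        ⇑((Embedding.induce {z | z ≠ r ∧ anc hG r z = c} (G := G)).toHom) :=
      Subtype.val_injective
    exact hG.IsAcyclic _ ((Walk.map_isCycle_iff_of_injective hinj).mpr hp)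

end Subtree

section Subtree2
variable [Fintype V] {r : V} {l : V → NNReal} {d : V → V → NNReal}
variable (hG : G.IsTree) {c : V} (hadj : G.Adj r c)

lemma sc_nbr_equiv {x : V} (hx : x ∈ {z | z ≠ r ∧ anc hG r z = c}) :
    Nat.card ((G.induce {z | z ≠ r ∧ anc hG r z = c}).neighborSet ⟨x, hx⟩) =
      (G.neighborSet x ∩ {z | z ≠ r ∧ anc hG r z = c}).ncard := by
  rw [← Nat.card_coe_set_eq]
  refine Nat.card_congr ?_
  refine ⟨fun w => ⟨w.val.val, by exact w.prop, w.val.prop⟩,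
    fun w => ⟨⟨w.val, w.prop.2⟩, by exact w.prop.1⟩, fun _ => rfl, fun _ => rfl⟩

include hadj in
lemma sc_outDeg {x : V} (hx : x ∈ {z | z ≠ r ∧ anc hG r z = c}) :
    outDeg (G.induce {z | z ≠ r ∧ anc hG r z = c}) ⟨c, sc_self hG hadj⟩ ⟨x, hx⟩ =
      outDeg G r x := by
  by_cases hxc : x = c
  · have hxx : (⟨x, hx⟩ : ↥{z | z ≠ r ∧ anc hG r z = c}) = ⟨c, sc_self hG hadj⟩ :=
      Subtype.ext hxc
    rw [hxx]
    have hveq : vdeg G c =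
        vdeg (G.induce {z | z ≠ r ∧ anc hG r z = c}) ⟨c, sc_self hG hadj⟩ + 1 := by
      rw [vdeg, vdeg, sc_nbr_equiv hG (sc_self hG hadj), Nat.card_coe_set_eq]
      have h1 : G.neighborSet c ∩ {z | z ≠ r ∧ anc hG r z = c} =
          G.neighborSet c \ {r} := by
        ext w
        constructor
        · rintro ⟨hw1, hw2⟩; exact ⟨hw1, fun h => (sc_not_r hG) (h ▸ hw2)⟩
        · rintro ⟨hw1, hw2⟩; exact ⟨hw1, sc_closed hG (sc_self hG hadj) hw1 hw2⟩
      have h2 : G.neighborSet c = insert r (G.neighborSet c \ {r}) := by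
        rw [Set.insert_diff_singleton, Set.insert_eq_self.mpr (by exact hadj.symm)]
      rw [h1]
      nth_rewrite 1 [h2]
      rw [Set.ncard_insert_of_notMem (fun h => h.2 rfl) (Set.toFinite _)]
    rw [outDeg, outDeg, if_pos rfl, if_neg hx.1, hxc]
    omega
  · have hveq : vdeg (G.induce {z | z ≠ r ∧ anc hG r z = c}) ⟨x, hx⟩ = vdeg G x := by
      rw [vdeg, vdeg, sc_nbr_equiv hG hx, Nat.card_coe_set_eq]
      congr 1
      refine Set.inter_eq_left.mpr fun w hw => sc_nbr hG hx hxc hw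
    rw [outDeg, outDeg, if_neg (fun h => hxc (congrArg Subtype.val h)), if_neg hx.1, hveq]

include hadj in
lemma sc_dsucc {u v : ↥{z | z ≠ r ∧ anc hG r z = c}}
    (h : DirectSucc (G.induce {z | z ≠ r ∧ anc hG r z = c}) ⟨c, sc_self hG hadj⟩ u v) :
    DirectSucc G r u.val v.val := by
  obtain ⟨hadj', p', hp', hu'⟩ := h
  set emb := (Embedding.induce {z | z ≠ r ∧ anc hG r z = c} (G := G)).toHom with hemb
  have hinj : Function.Injective ⇑emb := Subtype.val_injective
  set P := p'.map emb with hP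
  have hPp : P.IsPath := Walk.map_isPath_of_injective hinj hp'
  have hPsupp : P.support = p'.support.map Subtype.val := Walk.support_map _ _
  have hrP : r ∉ P.support := by
    rw [hPsupp]
    rintro hmem
    obtain ⟨w, _, hw⟩ := List.mem_map.mp hmem
    exact w.prop.1 hw
  have hQ : (P.concat hadj.symm).IsPath := by
    rw [← Walk.isPath_reverse_iff]
    erw [Walk.reverse_concat, Walk.cons_isPath_iff]
    refine ⟨hPp.reverse, ?_⟩
    rw [Walk.support_reverse]
    simpa using hrP
  refine ⟨by exact hadj', P.concat hadj.symm, hQ, ?_⟩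
  erw [Walk.support_concat]
  refine List.mem_append_left _ ?_
  erw [hPsupp]
  exact List.mem_map.mpr ⟨u, hu', rfl⟩

lemma sc_d
    (hd : ∀ u v, u ≠ v → ∀ p : G.Walk u v, p.IsPath →
      d u v = (p.support.map l).foldr max 0)
    {u v : ↥{z | z ≠ r ∧ anc hG r z = c}} (huv : u ≠ v)
    (p' : (G.induce {z | z ≠ r ∧ anc hG r z = c}).Walk u v) (hp' : p'.IsPath) :
    d u.val v.val = (p'.support.map (fun z => l z.val)).foldr max 0 := by
  set emb := (Embedding.induce {z | z ≠ r ∧ anc hG r z = c} (G := G)).toHom with hemb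
  have hinj : Function.Injective ⇑emb := Subtype.val_injective
  have hne : u.val ≠ v.val := fun h => huv (Subtype.ext h)
  rw [hd u.val v.val hne (p'.map emb) (Walk.map_isPath_of_injective hinj hp')]
  erw [Walk.support_map, List.map_map]
  rfl

lemma sc_card : Nat.card ↥{z | z ≠ r ∧ anc hG r z = c} < Nat.card V := by
  rw [Nat.card_coe_set_eq]
  have : ({z | z ≠ r ∧ anc hG r z = c} : Set V) ⊂ Set.univ := by
    refine ⟨Set.subset_univ _, fun h => sc_not_r hG (h (Set.mem_univ r))⟩
  calc ({z | z ≠ r ∧ anc hG r z = c} : Set V).ncard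
      < (Set.univ : Set V).ncard := Set.ncard_lt_ncard this (Set.toFinite _)
    _ = Nat.card V := Set.ncard_univ V

end Subtree2

universe ua ub

lemma good_main : ∀ (n : ℕ), ∀ {V1 : Type ua} {V2 : Type ub} [Fintype V1] [Fintype V2]
    (G1 : SimpleGraph V1) (G2 : SimpleGraph V2) (hG1 : G1.IsTree) (hG2 : G2.IsTree)
    (r1 : V1) (r2 : V2) (l1 : V1 → NNReal) (l2 : V2 → NNReal)
    (_h1a : ∀ u : V1, outDeg G1 r1 u ≠ 1)
    (h1b : ∀ u : V1, outDeg G1 r1 u = 0 ↔ l1 u = 0)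
    (h1c : ∀ u v : V1, DirectSucc G1 r1 u v → l1 v < l1 u)
    (_h2a : ∀ u : V2, outDeg G2 r2 u ≠ 1)
    (h2b : ∀ u : V2, outDeg G2 r2 u = 0 ↔ l2 u = 0)
    (h2c : ∀ u v : V2, DirectSucc G2 r2 u v → l2 v < l2 u)
    (d1 : V1 → V1 → NNReal) (d2 : V2 → V2 → NNReal)
    (hd10 : ∀ u, d1 u u = 0)
    (hd1 : ∀ u v, u ≠ v → ∀ p : G1.Walk u v, p.IsPath →
      d1 u v = (p.support.map l1).foldr max 0)
    (hd20 : ∀ u, d2 u u = 0)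
    (hd2 : ∀ u v, u ≠ v → ∀ p : G2.Walk u v, p.IsPath →
      d2 u v = (p.support.map l2).foldr max 0)
    (f : V1 → V2) (hfb : Function.Bijective f)
    (hfi : ∀ x y, d2 (f x) (f y) = d1 x y),
    Nat.card V1 ≤ n →
    ∃ g : V1 ≃ V2, (∀ u v, G1.Adj u v ↔ G2.Adj (g u) (g v)) ∧ ∀ v, l2 (g v) = l1 v := by
  intro n
  induction n with
  | zero =>
    intro V1 V2 _ _ G1 G2 hG1 hG2 r1 r2 l1 l2 h1a h1b h1c h2a h2b h2c d1 d2
      hd10 hd1 hd20 hd2 f hfb hfi hn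
    haveI : Nonempty V1 := hG1.isConnected.nonempty
    have := Nat.card_pos (α := V1)
    omega
  | succ n ih =>
    intro V1 V2 inst1 inst2 G1 G2 hG1 hG2 r1 r2 l1 l2 h1a h1b h1c h2a h2b h2c d1 d2
      hd10 hd1 hd20 hd2 f hfb hfi hn
    classical
    haveI : Nonempty V1 := hG1.isConnected.nonempty
    have hcardeq : Nat.card V1 = Nat.card V2 := Nat.card_eq_of_bijective f hfb
    by_cases hcard : Nat.card V1 = 1
    · -- base case : singletons
      have hsub1 : ∀ a b : V1, a = b := by
        haveI : Subsingleton V1 := by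
          rw [← Fintype.card_le_one_iff_subsingleton, ← Nat.card_eq_fintype_card]
          omega
        exact fun a b => Subsingleton.elim a b
      have hsub2 : ∀ a b : V2, a = b := by
        haveI : Subsingleton V2 := by
          rw [← Fintype.card_le_one_iff_subsingleton, ← Nat.card_eq_fintype_card]
          omega
        exact fun a b => Subsingleton.elim a b
      have hdeg1 : ∀ u : V1, outDeg G1 r1 u = 0 := by
        intro u
        have hv : vdeg G1 u = 0 := by
          rw [vdeg, Nat.card_coe_set_eq, Set.ncard_eq_zero (Set.toFinite _)]
          ext w
          simp only [mem_neighborSet, Set.mem_empty_iff_false, iff_false]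
          intro h
          exact h.ne (hsub1 u w)
        rw [outDeg]
        split <;> omega
      have hdeg2 : ∀ u : V2, outDeg G2 r2 u = 0 := by
        intro u
        have hv : vdeg G2 u = 0 := by
          rw [vdeg, Nat.card_coe_set_eq, Set.ncard_eq_zero (Set.toFinite _)]
          ext w
          simp only [mem_neighborSet, Set.mem_empty_iff_false, iff_false]
          intro h
          exact h.ne (hsub2 u w)
        rw [outDeg]
        split <;> omega
      refine ⟨Equiv.ofBijective f hfb, fun u v => ?_, fun v => ?_⟩
      · refine iff_of_false (fun h => h.ne (hsub1 u v)) (fun h => h.ne (hsub2 _ _))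
      · rw [(h2b _).mp (hdeg2 _), (h1b _).mp (hdeg1 _)]
    · -- inductive step
      have hc1 : 1 < Nat.card V1 := by
        haveI : Nonempty V1 := hG1.isConnected.nonempty
        have := Nat.card_pos (α := V1)
        omega
      have hc2 : 1 < Nat.card V2 := by omega
      -- equality of root labels
      have hD : l2 r2 = l1 r1 := by
        obtain ⟨x0, hx0⟩ := exists_ne_root (r := r1) hc1
        obtain ⟨y0, hy0⟩ := exists_ne_root (r := r2) hc2
        have le1 : l1 r1 ≤ l2 r2 := by
          have e1 : d1 x0 r1 = l1 r1 := d_to_root hG1 h1c hd1 hx0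
          rw [← e1, ← hfi]
          exact d_le_root hG2 h2c hd20 hd2 _ _
        have le2 : l2 r2 ≤ l1 r1 := by
          obtain ⟨a, ha⟩ := hfb.2 y0
          obtain ⟨b, hb⟩ := hfb.2 r2
          have hab : a ≠ b := by
            intro h
            rw [h, hb] at ha
            exact hy0 ha.symm
          have e1 : d2 y0 r2 = l2 r2 := d_to_root hG2 h2c hd2 hy0
          rw [← e1, ← ha, ← hb, hfi]
          exact d_le_root hG1 h1c hd10 hd1 _ _
        exact le_antisymm le2 le1
      -- apex transport
      have hapex12 : ∀ x : V1, (∀ y, y ≠ x → d1 x y = l1 r1) →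
          (∀ y, y ≠ f x → d2 (f x) y = l2 r2) := by
        intro x hx y' hy'
        obtain ⟨y, rfl⟩ := hfb.2 y'
        have hyx : y ≠ x := fun h => hy' (h ▸ rfl)
        rw [hfi, hx y hyx, hD]
      have hapex21 : ∀ x : V1, (∀ y, y ≠ f x → d2 (f x) y = l2 r2) →
          (∀ y, y ≠ x → d1 x y = l1 r1) := by
        intro x hx y hy
        rw [← hfi, hx (f y) (fun h => hy (hfb.1 h)), hD]
      -- internal children do not map to the root
      have hfc_ne : ∀ c : V1, G1.Adj r1 c → l1 c ≠ 0 → f c ≠ r2 := by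
        intro c hadjc hlc hfc
        obtain ⟨w, hds⟩ := exists_child hG1 ((not_iff_not.mpr (h1b c)).mpr hlc)
        have hdc : d1 c w = l1 c := by
          rw [d_adj hG1 hd1 hds.1]
          exact max_eq_left (h1c _ _ hds).le
        have hlt : l1 c < l1 r1 := l_lt_root hG1 h1c (Ne.symm hadjc.ne)
        have hwr : f w ≠ r2 := by
          rw [← hfc]
          exact fun h => hds.1.ne (hfb.1 h).symm
        have : d2 (f c) (f w) = l2 r2 := by
          rw [hfc, d_symm hG2 hd20 hd2]
          exact d_to_root hG2 h2c hd2 hwr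
        rw [hfi, hdc, hD] at this
        exact absurd this (ne_of_lt hlt)
      -- class correspondence
      have hclass : ∀ (c : V1), G1.Adj r1 c → l1 c ≠ 0 → ∀ x : V1,
          (x ≠ r1 ∧ anc hG1 r1 x = c) ↔
            (f x ≠ r2 ∧ anc hG2 r2 (f x) = anc hG2 r2 (f c)) := by
        intro c hadjc hlc x
        have hcr : c ≠ r1 := Ne.symm hadjc.ne
        have hfcr : f c ≠ r2 := hfc_ne c hadjc hlc
        constructor
        · rintro ⟨hx, hanc⟩
          have hdxc : d1 x c < l1 r1 := by
            have h1 : d1 x c ≤ l1 (anc hG1 r1 x) :=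
              d_same_class hG1 h1c hd10 hd1 hx hcr
                (hanc.trans (anc_child_self hG1 hadjc).symm)
            rw [hanc] at h1
            exact lt_of_le_of_lt h1 (l_lt_root hG1 h1c hcr)
          have hfx : f x ≠ r2 := by
            intro h
            have : d2 (f x) (f c) = l2 r2 := by
              rw [h, d_symm hG2 hd20 hd2]
              exact d_to_root hG2 h2c hd2 hfcr
            rw [hfi, hD] at this
            exact absurd this (ne_of_lt hdxc)
          refine ⟨hfx, ?_⟩
          by_contra hne
          have : d2 (f x) (f c) = l2 r2 := d_diff_class hG2 h2c hd2 hfx hfcr hne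
          rw [hfi, hD] at this
          exact absurd this (ne_of_lt hdxc)
        · rintro ⟨hfx, hanc2⟩
          have hdxc : d1 x c < l1 r1 := by
            have h1 : d2 (f x) (f c) ≤ l2 (anc hG2 r2 (f x)) :=
              d_same_class hG2 h2c hd20 hd2 hfx hfcr hanc2
            have h2 : l2 (anc hG2 r2 (f x)) < l2 r2 :=
              l_lt_root hG2 h2c (anc_ne_r hG2 hfx)
            rw [hfi] at h1
            rw [hD] at h2
            exact lt_of_le_of_lt h1 h2
          have hx : x ≠ r1 := by
            intro hxe
            have : d1 x c = l1 r1 := by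
              rw [d_symm hG1 hd10 hd1, hxe]
              exact d_to_root hG1 h1c hd1 hcr
            exact absurd this (ne_of_lt hdxc)
          refine ⟨hx, ?_⟩
          by_contra hne
          have : d1 x c = l1 r1 := d_diff_class hG1 h1c hd1 hx hcr
            (fun h => hne (h.trans (anc_child_self hG1 hadjc)))
          exact absurd this (ne_of_lt hdxc)
      -- the root of the image class of an internal child is internal
      have hl2c2 : ∀ c : V1, G1.Adj r1 c → l1 c ≠ 0 → l2 (anc hG2 r2 (f c)) ≠ 0 := by
        intro c hadjc hlc h0
        have hfcr : f c ≠ r2 := hfc_ne c hadjc hlc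
        have hadj2 : G2.Adj r2 (anc hG2 r2 (f c)) := anc_adj hG2 hfcr
        have hfc_eq : f c = anc hG2 r2 (f c) :=
          leaf_class_singleton hG2 h2b hadj2 h0 hfcr rfl
        have hA2 : ∀ y, y ≠ f c → d2 (f c) y = l2 r2 :=
          (apex_iff hG2 h2b h2c hd20 hd2 (f c)).mpr
            (Or.inr ⟨by rw [hfc_eq]; exact hadj2, by rw [hfc_eq]; exact h0⟩)
        have hA1 : ∀ y, y ≠ c → d1 c y = l1 r1 := hapex21 c hA2
        rcases (apex_iff hG1 h1b h1c hd10 hd1 c).mp hA1 with h | h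
        · exact (Ne.symm hadjc.ne) h
        · exact hlc h.2
      -- subtree isomorphisms from the induction hypothesis
      have hsub : ∀ (c : V1) (hadjc : G1.Adj r1 c) (hlc : l1 c ≠ 0),
          ∃ e : ↥{z | z ≠ r1 ∧ anc hG1 r1 z = c} ≃
              ↥{z | z ≠ r2 ∧ anc hG2 r2 z = anc hG2 r2 (f c)},
            (∀ u v, G1.Adj u.val v.val ↔ G2.Adj (e u).val (e v).val) ∧
            (∀ u, l2 (e u).val = l1 u.val) ∧
            (∀ u, (e u).val = anc hG2 r2 (f c) ↔ u.val = c) := by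
        intro c hadjc hlc
        have hfcr : f c ≠ r2 := hfc_ne c hadjc hlc
        have hadj2 : G2.Adj r2 (anc hG2 r2 (f c)) := anc_adj hG2 hfcr
        haveI : Fintype ↥{z | z ≠ r1 ∧ anc hG1 r1 z = c} := Fintype.ofFinite _
        haveI : Fintype ↥{z | z ≠ r2 ∧ anc hG2 r2 z = anc hG2 r2 (f c)} :=
          Fintype.ofFinite _
        have hf' : ∀ u : ↥{z | z ≠ r1 ∧ anc hG1 r1 z = c},
            f u.val ∈ {z | z ≠ r2 ∧ anc hG2 r2 z = anc hG2 r2 (f c)} :=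
          fun u => (hclass c hadjc hlc u.val).mp u.prop
        have hf'b : Function.Bijective
            (fun u : ↥{z | z ≠ r1 ∧ anc hG1 r1 z = c} =>
              (⟨f u.val, hf' u⟩ : ↥{z | z ≠ r2 ∧ anc hG2 r2 z = anc hG2 r2 (f c)})) := by
          constructor
          · intro a b hab
            exact Subtype.ext (hfb.1 (congrArg Subtype.val hab))
          · intro w
            obtain ⟨x, hx⟩ := hfb.2 w.val
            have hxm : x ∈ {z | z ≠ r1 ∧ anc hG1 r1 z = c} :=
              (hclass c hadjc hlc x).mpr (by rw [hx]; exact w.prop)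
            exact ⟨⟨x, hxm⟩, Subtype.ext hx⟩
        have hcard' : Nat.card ↥{z | z ≠ r1 ∧ anc hG1 r1 z = c} ≤ n := by
          have := sc_card (r := r1) (c := c) hG1
          omega
        obtain ⟨e, he_adj, he_lab⟩ := ih (G1.induce _) (G2.induce _)
          (sc_isTree hG1 hadjc) (sc_isTree hG2 hadj2)
          ⟨c, sc_self hG1 hadjc⟩ ⟨anc hG2 r2 (f c), sc_self hG2 hadj2⟩
          (fun z => l1 z.val) (fun z => l2 z.val)
          (fun u => by obtain ⟨x, hx⟩ := u; rw [sc_outDeg hG1 hadjc hx]; exact h1a x)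
          (fun u => by obtain ⟨x, hx⟩ := u; rw [sc_outDeg hG1 hadjc hx]; exact h1b x)
          (fun u v hds => h1c _ _ (sc_dsucc hG1 hadjc hds))
          (fun u => by obtain ⟨x, hx⟩ := u; rw [sc_outDeg hG2 hadj2 hx]; exact h2a x)
          (fun u => by obtain ⟨x, hx⟩ := u; rw [sc_outDeg hG2 hadj2 hx]; exact h2b x)
          (fun u v hds => h2c _ _ (sc_dsucc hG2 hadj2 hds))
          (fun a b => d1 a.val b.val) (fun a b => d2 a.val b.val)
          (fun u => hd10 u.val)
          (fun u v huv p hp => sc_d hG1 hd1 huv p hp)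
          (fun u => hd20 u.val)
          (fun u v huv p hp => sc_d hG2 hd2 huv p hp)
          _ hf'b
          (fun x y => hfi x.val y.val)
          hcard'
        have he_adj' : ∀ u v, G1.Adj u.val v.val ↔ G2.Adj (e u).val (e v).val :=
          fun u v => he_adj u v
        have hmax1 : ∀ u : ↥{z | z ≠ r1 ∧ anc hG1 r1 z = c}, l1 u.val ≤ l1 c := by
          intro u
          have := label_le_anc hG1 h1c u.prop.1
          rwa [u.prop.2] at this
        have hmax2 : ∀ u : ↥{z | z ≠ r2 ∧ anc hG2 r2 z = anc hG2 r2 (f c)},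
            u.val ≠ anc hG2 r2 (f c) → l2 u.val < l2 (anc hG2 r2 (f c)) := by
          intro u hu
          have := label_lt_anc hG2 h2c u.prop.1
            (by rw [u.prop.2]; exact fun h => hu h.symm)
          rwa [u.prop.2] at this
        have hroot : (e ⟨c, sc_self hG1 hadjc⟩).val = anc hG2 r2 (f c) := by
          by_contra hne
          have h1 : l2 (e ⟨c, sc_self hG1 hadjc⟩).val = l1 c :=
            he_lab ⟨c, sc_self hG1 hadjc⟩
          obtain ⟨z0, hz0⟩ := e.surjective ⟨anc hG2 r2 (f c), sc_self hG2 hadj2⟩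
          have h2 : l2 (anc hG2 r2 (f c)) = l1 z0.val := by
            rw [← he_lab z0, hz0]
          have h3 : l1 z0.val ≤ l1 c := hmax1 z0
          have h4 := hmax2 _ hne
          rw [h1, h2] at h4
          exact absurd h4 (not_lt.mpr h3)
        refine ⟨e, he_adj', he_lab, fun u => ?_⟩
        constructor
        · intro h
          have heq : e u = e ⟨c, sc_self hG1 hadjc⟩ :=
            Subtype.ext (h.trans hroot.symm)
          exact congrArg Subtype.val (e.injective heq)
        · intro h
          have : u = ⟨c, sc_self hG1 hadjc⟩ := Subtype.ext h
          rw [this, hroot]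
      choose E hE using hsub
      have hleafchild : ∀ x (hx : x ≠ r1), l1 (anc hG1 r1 x) = 0 → x = anc hG1 r1 x :=
        fun x hx h0 => leaf_class_singleton hG1 h1b (anc_adj hG1 hx) h0 hx rfl
      have hswap : ∀ x (hx : x ≠ r1), l1 (anc hG1 r1 x) = 0 →
          G2.Adj r2 (Equiv.swap r2 (f r1) (f x)) ∧
            l2 (Equiv.swap r2 (f r1) (f x)) = 0 := by
        intro x hx h0
        have hxeq : x = anc hG1 r1 x := hleafchild x hx h0
        have hadjx : G1.Adj r1 x := by
          have := anc_adj hG1 hx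
          rwa [← hxeq] at this
        have hlx : l1 x = 0 := by rw [hxeq]; exact h0
        have hA1 : ∀ y, y ≠ x → d1 x y = l1 r1 :=
          (apex_iff hG1 h1b h1c hd10 hd1 x).mpr (Or.inr ⟨hadjx, hlx⟩)
        have hA2 := hapex12 x hA1
        by_cases hfx : f x = r2
        · have hw : Equiv.swap r2 (f r1) (f x) = f r1 := by
            rw [hfx]; exact Equiv.swap_apply_left _ _
          have hfr : f r1 ≠ r2 := fun h => hx (hfb.1 (hfx.trans h.symm))
          have hA2' : ∀ y, y ≠ f r1 → d2 (f r1) y = l2 r2 :=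
            hapex12 r1 ((apex_iff hG1 h1b h1c hd10 hd1 r1).mpr (Or.inl rfl))
          rcases (apex_iff hG2 h2b h2c hd20 hd2 (f r1)).mp hA2' with h | h
          · exact absurd h hfr
          · rw [hw]; exact h
        · have hfx1 : f x ≠ f r1 := fun h => hx (hfb.1 h)
          have hw : Equiv.swap r2 (f r1) (f x) = f x :=
            Equiv.swap_apply_of_ne_of_ne hfx hfx1
          rcases (apex_iff hG2 h2b h2c hd20 hd2 (f x)).mp hA2 with h | h
          · exact absurd h hfx
          · rw [hw]; exact h
      obtain ⟨g, hg1, hg2, hg3⟩ : ∃ g : V1 → V2, g r1 = r2 ∧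
          (∀ x (hx : x ≠ r1) (_h0 : l1 (anc hG1 r1 x) = 0),
            g x = Equiv.swap r2 (f r1) (f x)) ∧
          (∀ x (hx : x ≠ r1) (h0 : ¬ l1 (anc hG1 r1 x) = 0),
            g x = (E (anc hG1 r1 x) (anc_adj hG1 hx) h0 ⟨x, hx, rfl⟩).val) := by
        refine ⟨fun x => if hx : x = r1 then r2 else
          if h0 : l1 (anc hG1 r1 x) = 0 then Equiv.swap r2 (f r1) (f x)
          else (E (anc hG1 r1 x) (anc_adj hG1 hx) h0 ⟨x, hx, rfl⟩).val, ?_, ?_, ?_⟩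
        · simp
        · intro x hx h0; simp only [dif_neg hx, dif_pos h0]
        · intro x hx h0; simp only [dif_neg hx, dif_neg h0]
      have hg3' : ∀ (c : V1) (hadjc : G1.Adj r1 c) (hlc : ¬ l1 c = 0)
          (x : V1) (hx : x ≠ r1) (hxc : anc hG1 r1 x = c),
          g x = (E c hadjc hlc ⟨x, hx, hxc⟩).val := by
        intro c hadjc hlc x hx hxc
        subst hxc
        exact hg3 x hx hlc
      have hgmem : ∀ x (hx : x ≠ r1) (h0 : ¬ l1 (anc hG1 r1 x) = 0),
          g x ≠ r2 ∧ anc hG2 r2 (g x) = anc hG2 r2 (f (anc hG1 r1 x)) := by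
        intro x hx h0
        rw [hg3 x hx h0]
        exact (E (anc hG1 r1 x) (anc_adj hG1 hx) h0 ⟨x, hx, rfl⟩).prop
      have hgne_r2 : ∀ x, x ≠ r1 → g x ≠ r2 := by
        intro x hx
        by_cases h0 : l1 (anc hG1 r1 x) = 0
        · have h1 := (hswap x hx h0).1
          rw [← hg2 x hx h0] at h1
          exact Ne.symm h1.ne
        · exact (hgmem x hx h0).1
      have hccinj : ∀ (ca cb : V1), G1.Adj r1 ca → ¬ l1 ca = 0 → G1.Adj r1 cb →
          ¬ l1 cb = 0 → anc hG2 r2 (f ca) = anc hG2 r2 (f cb) → ca = cb := by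
        intro ca cb hca h0a hcb h0b hcc
        have h2 := (hclass ca hca h0a cb).mpr ⟨hfc_ne cb hcb h0b, hcc.symm⟩
        rw [← h2.2]
        exact anc_child_self hG1 hcb
      -- injectivity of g
      have hginj : Function.Injective g := by
        intro a b hab
        by_cases ha : a = r1 <;> by_cases hb : b = r1
        · rw [ha, hb]
        · exfalso
          rw [ha, hg1] at hab
          exact hgne_r2 b hb hab.symm
        · exfalso
          rw [hb, hg1] at hab
          exact hgne_r2 a ha hab
        · by_cases h0a : l1 (anc hG1 r1 a) = 0 <;>
            by_cases h0b : l1 (anc hG1 r1 b) = 0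
          · rw [hg2 a ha h0a, hg2 b hb h0b] at hab
            exact hfb.1 ((Equiv.swap r2 (f r1)).injective hab)
          · exfalso
            have hla : l2 (g a) = 0 := by
              rw [hg2 a ha h0a]; exact (hswap a ha h0a).2
            have hAa : G2.Adj r2 (g a) := by
              rw [hg2 a ha h0a]; exact (hswap a ha h0a).1
            obtain ⟨hgb_ne, hgb_anc⟩ := hgmem b hb h0b
            have hc2ne := hl2c2 (anc hG1 r1 b) (anc_adj hG1 hb) h0b
            rw [hab] at hla hAa
            have h5 : anc hG2 r2 (g b) = g b := anc_child_self hG2 hAa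
            rw [hgb_anc] at h5
            exact hc2ne (by rw [h5]; exact hla)
          · exfalso
            have hla : l2 (g b) = 0 := by
              rw [hg2 b hb h0b]; exact (hswap b hb h0b).2
            have hAa : G2.Adj r2 (g b) := by
              rw [hg2 b hb h0b]; exact (hswap b hb h0b).1
            obtain ⟨hga_ne, hga_anc⟩ := hgmem a ha h0a
            have hc2ne := hl2c2 (anc hG1 r1 a) (anc_adj hG1 ha) h0a
            rw [← hab] at hla hAa
            have h5 : anc hG2 r2 (g a) = g a := anc_child_self hG2 hAa
            rw [hga_anc] at h5
            exact hc2ne (by rw [h5]; exact hla)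
          · obtain ⟨hga_ne, hga_anc⟩ := hgmem a ha h0a
            obtain ⟨hgb_ne, hgb_anc⟩ := hgmem b hb h0b
            have hcc : anc hG2 r2 (f (anc hG1 r1 a)) = anc hG2 r2 (f (anc hG1 r1 b)) := by
              rw [← hga_anc, ← hgb_anc, hab]
            have hab_anc : anc hG1 r1 a = anc hG1 r1 b :=
              hccinj _ _ (anc_adj hG1 ha) h0a (anc_adj hG1 hb) h0b hcc
            rw [hg3' (anc hG1 r1 a) (anc_adj hG1 ha) h0a a ha rfl,
              hg3' (anc hG1 r1 a) (anc_adj hG1 ha) h0a b hb hab_anc.symm] at hab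
            have := (E (anc hG1 r1 a) (anc_adj hG1 ha) h0a).injective
              (Subtype.ext hab)
            exact congrArg Subtype.val this
      have hgbij : Function.Bijective g := by
        rw [Fintype.bijective_iff_injective_and_card]
        refine ⟨hginj, ?_⟩
        rw [← Nat.card_eq_fintype_card, ← Nat.card_eq_fintype_card]
        exact hcardeq
      -- root adjacency characterization
      have hroot_iff : ∀ x, x ≠ r1 → (G1.Adj r1 x ↔ G2.Adj r2 (g x)) := by
        intro x hx
        by_cases h0 : l1 (anc hG1 r1 x) = 0
        · have hadjx : G1.Adj r1 x := by
            have := anc_adj hG1 hx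
            rwa [← hleafchild x hx h0] at this
          have h2 : G2.Adj r2 (g x) := by
            rw [hg2 x hx h0]; exact (hswap x hx h0).1
          exact iff_of_true hadjx h2
        · constructor
          · intro h
            have hveq : anc hG1 r1 x = x := anc_child_self hG1 h
            rw [hg3 x hx h0]
            have h3 := ((hE (anc hG1 r1 x) (anc_adj hG1 hx) h0).2.2
              ⟨x, hx, rfl⟩).mpr hveq.symm
            rw [h3]
            exact anc_adj hG2 (hfc_ne _ (anc_adj hG1 hx) h0)
          · intro h
            have h1 : anc hG2 r2 (g x) = g x := anc_child_self hG2 h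
            have h2 := (hgmem x hx h0).2
            have h3 : g x = anc hG2 r2 (f (anc hG1 r1 x)) := by rw [← h1, h2]
            rw [hg3 x hx h0] at h3
            have h4 := ((hE (anc hG1 r1 x) (anc_adj hG1 hx) h0).2.2
              ⟨x, hx, rfl⟩).mp h3
            have h5 := anc_adj hG1 hx
            rwa [← h4] at h5
      refine ⟨Equiv.ofBijective g hgbij, fun u v => ?_, fun v => ?_⟩
      · show G1.Adj u v ↔ G2.Adj (g u) (g v)
        by_cases hu : u = r1 <;> by_cases hv : v = r1
        · rw [hu, hv, hg1]
          exact iff_of_false (G1.irrefl) (G2.irrefl)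
        · rw [hu, hg1]
          exact hroot_iff v hv
        · rw [hv, hg1, SimpleGraph.adj_comm, SimpleGraph.adj_comm (G := G2)]
          exact hroot_iff u hu
        · by_cases huv : u = v
          · rw [huv]
            exact iff_of_false (G1.irrefl) (G2.irrefl)
          · by_cases hanc : anc hG1 r1 u = anc hG1 r1 v
            · by_cases h0 : l1 (anc hG1 r1 u) = 0
              · have h0v : l1 (anc hG1 r1 v) = 0 := by rw [← hanc]; exact h0
                have : u = v := by
                  rw [hleafchild u hu h0, hanc, ← hleafchild v hv h0v]
                exact absurd this huv
              · have h0v : ¬ l1 (anc hG1 r1 v) = 0 := by rw [← hanc]; exact h0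
                rw [hg3' (anc hG1 r1 u) (anc_adj hG1 hu) h0 u hu rfl,
                  hg3' (anc hG1 r1 u) (anc_adj hG1 hu) h0 v hv hanc.symm]
                exact (hE (anc hG1 r1 u) (anc_adj hG1 hu) h0).1
                  ⟨u, hu, rfl⟩ ⟨v, hv, hanc.symm⟩
            · refine iff_of_false (fun h => hanc (anc_eq_of_adj hG1 hu hv h)) ?_
              intro h
              have heq2 : anc hG2 r2 (g u) = anc hG2 r2 (g v) :=
                anc_eq_of_adj hG2 (hgne_r2 u hu) (hgne_r2 v hv) h
              by_cases h0u : l1 (anc hG1 r1 u) = 0 <;>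
                by_cases h0v : l1 (anc hG1 r1 v) = 0
              · -- both leaves : g u = g v contradicts injectivity
                have hAu : G2.Adj r2 (g u) := by
                  rw [hg2 u hu h0u]; exact (hswap u hu h0u).1
                have hAv : G2.Adj r2 (g v) := by
                  rw [hg2 v hv h0v]; exact (hswap v hv h0v).1
                rw [anc_child_self hG2 hAu, anc_child_self hG2 hAv] at heq2
                exact huv (hginj heq2)
              · have hAu : G2.Adj r2 (g u) := by
                  rw [hg2 u hu h0u]; exact (hswap u hu h0u).1
                have hlu : l2 (g u) = 0 := by
                  rw [hg2 u hu h0u]; exact (hswap u hu h0u).2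
                rw [anc_child_self hG2 hAu, (hgmem v hv h0v).2] at heq2
                exact hl2c2 (anc hG1 r1 v) (anc_adj hG1 hv) h0v
                  (by rw [← heq2]; exact hlu)
              · have hAv : G2.Adj r2 (g v) := by
                  rw [hg2 v hv h0v]; exact (hswap v hv h0v).1
                have hlv : l2 (g v) = 0 := by
                  rw [hg2 v hv h0v]; exact (hswap v hv h0v).2
                rw [anc_child_self hG2 hAv, (hgmem u hu h0u).2] at heq2
                exact hl2c2 (anc hG1 r1 u) (anc_adj hG1 hu) h0u
                  (by rw [heq2]; exact hlv)
              · rw [(hgmem u hu h0u).2, (hgmem v hv h0v).2] at heq2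
                exact hanc (hccinj _ _ (anc_adj hG1 hu) h0u (anc_adj hG1 hv) h0v heq2)
      · show l2 (g v) = l1 v
        by_cases hv : v = r1
        · rw [hv, hg1]; exact hD
        · by_cases h0 : l1 (anc hG1 r1 v) = 0
          · rw [hg2 v hv h0, (hswap v hv h0).2, hleafchild v hv h0]
            exact h0.symm
          · rw [hg3 v hv h0]
            exact (hE _ (anc_adj hG1 hv) h0).2.1 ⟨v, hv, rfl⟩





/-- For labeled rooted trees `T₁(r₁, l₁)`, `T₂(r₂, l₂)` with `δ⁺(u) ≠ 1`,
`δ⁺(u) = 0 ↔ lᵢ(u) = 0`, and labels strictly decreasing along direct successors: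
(a) `T₁(l₁) ≃ T₂(l₂)` as labeled trees iff `(V(T₁), d_{l₁}) ≃ (V(T₂), d_{l₂})`;
(b) if the spaces are isometric, then `|V(T₁)| = |V(T₂)| = 1` iff every isometry is an
isomorphism of the labeled trees. -/
theorem stmt19_labeled_rooted_trees_iso_and_rigidity
    {V1 V2 : Type*} [Fintype V1] [Fintype V2]
    (G1 : SimpleGraph V1) (G2 : SimpleGraph V2)
    (hG1 : G1.IsTree) (hG2 : G2.IsTree)
    (r1 : V1) (r2 : V2) (l1 : V1 → NNReal) (l2 : V2 → NNReal)
    (h1a : ∀ u : V1, outDeg G1 r1 u ≠ 1)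
    (h1b : ∀ u : V1, outDeg G1 r1 u = 0 ↔ l1 u = 0)
    (h1c : ∀ u v : V1, DirectSucc G1 r1 u v → l1 v < l1 u)
    (h2a : ∀ u : V2, outDeg G2 r2 u ≠ 1)
    (h2b : ∀ u : V2, outDeg G2 r2 u = 0 ↔ l2 u = 0)
    (h2c : ∀ u v : V2, DirectSucc G2 r2 u v → l2 v < l2 u)
    (d1 : V1 → V1 → NNReal) (d2 : V2 → V2 → NNReal)
    (hd10 : ∀ u, d1 u u = 0)
    (hd1 : ∀ u v, u ≠ v → ∀ p : G1.Walk u v, p.IsPath →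
      d1 u v = (p.support.map l1).foldr max 0)
    (hd20 : ∀ u, d2 u u = 0)
    (hd2 : ∀ u v, u ≠ v → ∀ p : G2.Walk u v, p.IsPath →
      d2 u v = (p.support.map l2).foldr max 0) :
    ((∃ f : V1 ≃ V2, (∀ u v, G1.Adj u v ↔ G2.Adj (f u) (f v)) ∧
        ∀ v, l2 (f v) = l1 v) ↔
      (∃ f : V1 → V2, Function.Bijective f ∧ ∀ x y, d2 (f x) (f y) = d1 x y)) ∧
    ((∃ f : V1 → V2, Function.Bijective f ∧ ∀ x y, d2 (f x) (f y) = d1 x y) →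
      ((Nat.card V1 = 1 ∧ Nat.card V2 = 1) ↔
        (∀ f : V1 → V2, Function.Bijective f →
          (∀ x y, d2 (f x) (f y) = d1 x y) →
          ((∀ u v, G1.Adj u v ↔ G2.Adj (f u) (f v)) ∧ ∀ v, l2 (f v) = l1 v)))) := by
  classical
  constructor
  · constructor
    · rintro ⟨f, hfadj, hflab⟩
      refine ⟨f, f.bijective, fun x y => ?_⟩
      by_cases hxy : x = y
      · rw [hxy, hd10, hd20]
      · set φ : G1 →g G2 := ⟨f, fun h => (hfadj _ _).mp h⟩ with hφ
        have hφcoe : ⇑φ = ⇑f := rfl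
        have hne : f x ≠ f y := fun h => hxy (f.injective h)
        have hPp : ((pth hG1 x y).map φ).IsPath :=
          Walk.map_isPath_of_injective (by rw [hφcoe]; exact f.injective)
            (pth_isPath hG1 x y)
        rw [hd2 _ _ hne _ hPp, hd1 x y hxy _ (pth_isPath hG1 x y),
          Walk.support_map, List.map_map]
        have : l2 ∘ ⇑φ = l1 := funext fun v => hflab v
        rw [this]
    · rintro ⟨f, hfb, hfi⟩
      obtain ⟨g, hgadj, hglab⟩ := good_main (Nat.card V1) G1 G2 hG1 hG2 r1 r2 l1 l2
        h1a h1b h1c h2a h2b h2c d1 d2 hd10 hd1 hd20 hd2 f hfb hfi le_rfl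
      exact ⟨g, hgadj, hglab⟩
  · rintro ⟨f0, hf0b, hf0i⟩
    have hcardeq : Nat.card V1 = Nat.card V2 := Nat.card_eq_of_bijective f0 hf0b
    constructor
    · rintro ⟨hcV1, hcV2⟩ f hfbij hfiso
      have hsub1 : ∀ a b : V1, a = b := by
        haveI : Subsingleton V1 := by
          rw [← Fintype.card_le_one_iff_subsingleton, ← Nat.card_eq_fintype_card]
          omega
        exact fun a b => Subsingleton.elim a b
      have hsub2 : ∀ a b : V2, a = b := by
        haveI : Subsingleton V2 := by
          rw [← Fintype.card_le_one_iff_subsingleton, ← Nat.card_eq_fintype_card]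
          omega
        exact fun a b => Subsingleton.elim a b
      have hdeg1 : ∀ u : V1, outDeg G1 r1 u = 0 := by
        intro u
        have hv : vdeg G1 u = 0 := by
          rw [vdeg, Nat.card_coe_set_eq, Set.ncard_eq_zero (Set.toFinite _)]
          ext w
          simp only [mem_neighborSet, Set.mem_empty_iff_false, iff_false]
          intro h
          exact h.ne (hsub1 u w)
        rw [outDeg]
        split <;> omega
      have hdeg2 : ∀ u : V2, outDeg G2 r2 u = 0 := by
        intro u
        have hv : vdeg G2 u = 0 := by
          rw [vdeg, Nat.card_coe_set_eq, Set.ncard_eq_zero (Set.toFinite _)]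
          ext w
          simp only [mem_neighborSet, Set.mem_empty_iff_false, iff_false]
          intro h
          exact h.ne (hsub2 u w)
        rw [outDeg]
        split <;> omega
      constructor
      · intro u v
        exact iff_of_false (fun h => h.ne (hsub1 u v)) (fun h => h.ne (hsub2 _ _))
      · intro v
        rw [(h2b _).mp (hdeg2 _), (h1b _).mp (hdeg1 _)]
    · intro hall
      by_contra hn
      have hc1 : 1 < Nat.card V1 := by
        haveI : Nonempty V1 := hG1.isConnected.nonempty
        have hpos := Nat.card_pos (α := V1)
        rcases Nat.lt_or_ge 1 (Nat.card V1) with h | h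
        · exact h
        · exact absurd ⟨by omega, by omega⟩ hn
      obtain ⟨p, c, hc0, hlp, hpc, hkey⟩ := exists_leaf_swap hG1 h1b h1c hd1 hc1
      have hsymm := d_symm hG1 hd10 hd1
      set σ := Equiv.swap p c with hσ
      have hσp : σ p = c := Equiv.swap_apply_left p c
      have hσc : σ c = p := Equiv.swap_apply_right p c
      have hσo : ∀ z, z ≠ p → z ≠ c → σ z = z :=
        fun z h1 h2 => Equiv.swap_apply_of_ne_of_ne h1 h2
      have hσiso : ∀ x y, d1 (σ x) (σ y) = d1 x y := by
        intro x y
        by_cases hxp : x = p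
        · by_cases hyp : y = p
          · rw [hxp, hyp, hd10, hd10]
          · by_cases hyc : y = c
            · rw [hxp, hyc, hσp, hσc]
              exact hsymm c p
            · rw [hxp, hσp, hσo y hyp hyc, hsymm c y, ← hkey y hyp hyc, hsymm y p]
        · by_cases hxc : x = c
          · by_cases hyp : y = p
            · rw [hxc, hyp, hσc, hσp]
              exact hsymm p c
            · by_cases hyc : y = c
              · rw [hxc, hyc, hd10, hd10]
              · rw [hxc, hσc, hσo y hyp hyc, hsymm p y, hkey y hyp hyc, hsymm y c]
          · rw [hσo x hxp hxc]
            by_cases hyp : y = p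
            · rw [hyp, hσp]
              exact (hkey x hxp hxc).symm
            · by_cases hyc : y = c
              · rw [hyc, hσc]
                exact hkey x hxp hxc
              · rw [hσo y hyp hyc]
      have h1 := hall (f0 ∘ σ) (hf0b.comp σ.bijective)
        (fun x y => by rw [Function.comp_apply, Function.comp_apply, hf0i, hσiso])
      have h2 := hall f0 hf0b hf0i
      have h3 := h1.2 p
      rw [Function.comp_apply, hσp, h2.2 c, hc0] at h3
      exact absurd h3.symm (ne_of_gt hlp)
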